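/- Assume every capacity c'_k is an integer power of 2 with c'_k ≥ 1, and for i ≥ 0 let J^(i) be the set of jobs whose bottleneck capacity with respect to (c'_k) equals 2^i. Suppose that for each i we are given a Round-SAP packing Γ^(i) of J^(i) into k_i rounds, where in Γ^(0) every edge has capacity 1 and in Γ^(i) for i ≥ 1 every edge has capacity 2^{i−1}. Then J = ∪_i J^(i) admits a Round-SAP packing into max_i k_i rounds under the capacities (c'_k). -/

import Mathlib

open scoped Classical

namespace PathSAP

variable {ι : Type*}

/-- Job `i` uses the edge `e_{k+1}` (for `k : Fin m`, edges being 1-indexed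
`e_1, …, e_m`) iff `s_i < k + 1 ≤ t_i`, i.e. iff `s_i ≤ k < t_i`. -/
def uses (s t : ι → ℕ) {m : ℕ} (i : ι) (k : Fin m) : Prop :=
  s i ≤ (k : ℕ) ∧ (k : ℕ) < t i

/-- The open rectangle `(s_i, t_i) × (h_i, h_i + d_i)` of job `i` drawn at height `h i`. -/
def rect (s t : ι → ℕ) (d h : ι → ℝ) (i : ι) : Set (ℝ × ℝ) :=
  Set.Ioo (s i : ℝ) (t i : ℝ) ×ˢ Set.Ioo (h i) (h i + d i)

/-- The bottleneck capacity of job `i` (the minimum capacity among the edges it uses)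
equals `v`: every edge used by `i` has capacity at least `v`, and some edge used by `i`
has capacity exactly `v`. -/
def BottleneckEq (s t : ι → ℕ) {m : ℕ} (c : Fin m → ℝ) (i : ι) (v : ℝ) : Prop :=
  (∀ k : Fin m, uses s t i k → v ≤ c k) ∧ (∃ k : Fin m, uses s t i k ∧ c k = v)

/-- The jobs satisfying `P` admit a Round-SAP packing into `K` rounds under the edge
capacities `c`: there are a round assignment and nonnegative heights such that each job
(satisfying `P`) fits below the capacity of each edge it uses, and rectangles of
distinct jobs (satisfying `P`) placed in the same round are disjoint. -/
def SAPPackingOn (s t : ι → ℕ) (d : ι → ℝ) (P : ι → Prop) (K : ℕ) {m : ℕ}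
    (c : Fin m → ℝ) : Prop :=
  ∃ (f : ι → Fin K) (h : ι → ℝ),
    (∀ i, P i → 0 ≤ h i) ∧
    (∀ i, P i → ∀ k : Fin m, uses s t i k → h i + d i ≤ c k) ∧
    (∀ i j, P i → P j → i ≠ j → f i = f j →
      Disjoint (rect s t d h i) (rect s t d h j))


/-- `(f, h)` is a Round-SAP packing of all the jobs into `K` rounds under the edge
capacities `c`. -/
def IsSAPPacking (s t : ι → ℕ) (d : ι → ℝ) {m : ℕ} (c : Fin m → ℝ)
    {K : ℕ} (f : ι → Fin K) (h : ι → ℝ) : Prop :=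
  (∀ i, 0 ≤ h i) ∧
  (∀ i (k : Fin m), uses s t i k → h i + d i ≤ c k) ∧
  (∀ i j, i ≠ j → f i = f j → Disjoint (rect s t d h i) (rect s t d h j))

end PathSAP

open PathSAP in
/-- Assume every capacity `c'_k` is an integer power of 2 with
`c'_k ≥ 1`, and for `i ≥ 0` let `J^(i)` be the set of jobs whose bottleneck capacity
w.r.t. `(c'_k)` equals `2^i`. Suppose that for each `i` we are given a Round-SAP packing
`Γ^(i)` of `J^(i)` into `k_i` rounds, where in `Γ^(0)` every edge has capacity 1 and in
`Γ^(i)` for `i ≥ 1` every edge has capacity `2^{i−1}`. Then `J = ∪_i J^(i)` admits a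
Round-SAP packing into `max_i k_i` rounds under the capacities `(c'_k)` (stated here
for any `K` with `k_i ≤ K` for all `i`). -/
theorem sap_combine_bottleneck_levels {ι : Type*} [Fintype ι] {m : ℕ}
    (c' : Fin m → ℝ) (hpow : ∀ k, ∃ e : ℕ, c' k = 2 ^ e)
    (s t : ι → ℕ) (d : ι → ℝ)
    (hst : ∀ i, s i < t i) (htm : ∀ i, t i ≤ m) (hd0 : ∀ i, 0 < d i)
    (kk : ℕ → ℕ) (K : ℕ) (hK : ∀ lvl : ℕ, kk lvl ≤ K)
    (hpack0 : SAPPackingOn s t d (fun i => BottleneckEq s t c' i 1) (kk 0)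
      (fun _ : Fin m => (1 : ℝ)))
    (hpacki : ∀ lvl : ℕ, 1 ≤ lvl →
      SAPPackingOn s t d (fun i => BottleneckEq s t c' i (2 ^ lvl)) (kk lvl)
        (fun _ : Fin m => (2 : ℝ) ^ (lvl - 1))) :
    SAPPackingOn s t d (fun _ => True) K c' := by
    classical
  -- unified packings at each level
  have pack : ∀ l : ℕ, ∃ (f : ι → Fin (kk l)) (h : ι → ℝ),
      (∀ i, BottleneckEq s t c' i (2 ^ l) → 0 ≤ h i) ∧
      (∀ i, BottleneckEq s t c' i (2 ^ l) → ∀ k : Fin m, uses s t i k →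
        h i + d i ≤ (2:ℝ) ^ (l - 1)) ∧
      (∀ i j, BottleneckEq s t c' i (2 ^ l) → BottleneckEq s t c' j (2 ^ l) →
        i ≠ j → f i = f j → Disjoint (rect s t d h i) (rect s t d h j)) := by
    intro l
    rcases Nat.eq_zero_or_pos l with rfl | hl
    · obtain ⟨f, h, h1, h2, h3⟩ := hpack0
      exact ⟨f, h, by simpa using h1, by simpa using h2, by simpa using h3⟩
    · obtain ⟨f, h, h1, h2, h3⟩ := hpacki l hl
      exact ⟨f, h, h1, h2, h3⟩
  choose F H Hnn Hcap Hdisj using pack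
  -- every job has a bottleneck level
  have blev : ∀ i, ∃ e : ℕ, BottleneckEq s t c' i (2 ^ e) := by
    intro i
    have hne : (Finset.univ.filter (fun k : Fin m => uses s t i k)).Nonempty := by
      refine ⟨⟨s i, lt_of_lt_of_le (hst i) (htm i)⟩, ?_⟩
      exact Finset.mem_filter.mpr ⟨Finset.mem_univ _, le_refl _, hst i⟩
    obtain ⟨k, hk, hkmin⟩ := Finset.exists_min_image _ c' hne
    obtain ⟨e, he⟩ := hpow k
    refine ⟨e, fun k' hk' => ?_, ⟨k, by simpa using hk, he⟩⟩
    rw [← he]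
    exact hkmin k' (by simpa using hk')
  choose lv hlv using blev
  set off : ℕ → ℝ := fun l => (2:ℝ) ^ l - (2:ℝ) ^ (l - 1) with hoff
  have hmono : ∀ a b : ℕ, a ≤ b → (2:ℝ) ^ a ≤ (2:ℝ) ^ b := by
    intro a b hab
    exact pow_le_pow_right₀ (by norm_num) hab
  have off_nonneg : ∀ l, 0 ≤ off l := by
    intro l
    have := hmono (l - 1) l (Nat.sub_le l 1)
    simp only [hoff]; linarith
  have off_add : ∀ l, off l + (2:ℝ) ^ (l - 1) = 2 ^ l := by
    intro l; simp [hoff]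
  have hoff_ge : ∀ l l' : ℕ, l < l' → (2:ℝ) ^ l ≤ off l' := by
    intro l l' hll
    have h1 : l' - 1 + 1 = l' := Nat.sub_add_cancel (by omega : 1 ≤ l')
    have h2 : ∀ a : ℕ, off (a + 1) = 2 ^ a := by
      intro a
      simp only [hoff, Nat.add_sub_cancel, pow_succ]
      ring
    rw [← h1, h2]
    exact hmono l (l' - 1) (Nat.le_pred_of_lt hll)
  have edge0 : ∀ i : ι, ∃ k : Fin m, uses s t i k := fun i =>
    ⟨⟨s i, lt_of_lt_of_le (hst i) (htm i)⟩, le_refl _, hst i⟩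
  -- total height bound
  have htot : ∀ i : ι, off (lv i) + H (lv i) i + d i ≤ 2 ^ lv i := by
    intro i
    obtain ⟨k, hk⟩ := edge0 i
    have := Hcap (lv i) i (hlv i) k hk
    have := off_add (lv i)
    linarith
  have hHnn : ∀ i : ι, 0 ≤ H (lv i) i := fun i => Hnn (lv i) i (hlv i)
  -- the cross-level disjointness
  have main : ∀ i j : ι, lv i < lv j →
      Disjoint (rect s t d (fun x => off (lv x) + H (lv x) x) i)
        (rect s t d (fun x => off (lv x) + H (lv x) x) j) := by
    intro i j hij
    rw [Set.disjoint_left]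
    intro p hp hp'
    simp only [rect, Set.mem_prod, Set.mem_Ioo] at hp hp'
    have h1 : p.2 < 2 ^ lv i := lt_of_lt_of_le hp.2.2 (htot i)
    have h2 : (2:ℝ) ^ lv i ≤ off (lv j) := hoff_ge _ _ hij
    have h3 : 0 ≤ H (lv j) j := hHnn j
    linarith [hp'.2.1]
  refine ⟨fun i => Fin.castLE (hK (lv i)) (F (lv i) i),
    fun i => off (lv i) + H (lv i) i, fun i _ => ?_, fun i _ k hk => ?_, ?_⟩
  · dsimp only
    have := hHnn i
    have := off_nonneg (lv i)
    linarith
  · dsimp only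
    have h1 := Hcap (lv i) i (hlv i) k hk
    have h2 := off_add (lv i)
    have h3 : (2:ℝ) ^ lv i ≤ c' k := (hlv i).1 k hk
    linarith
  · intro i j _ _ hij hf
    rcases lt_trichotomy (lv i) (lv j) with hlt | heq | hgt
    · exact main i j hlt
    · -- same level
      have hji : BottleneckEq s t c' j (2 ^ lv i) := heq ▸ hlv j
      have hFij : F (lv i) i = F (lv i) j := by
        have hv := congrArg Fin.val hf
        simp only [Fin.coe_castLE] at hv
        apply Fin.ext
        rw [hv, heq]
      have hD := Hdisj (lv i) i j (hlv i) hji hij hFij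
      rw [Set.disjoint_left] at hD ⊢
      intro p hp hp'
      simp only [rect, Set.mem_prod, Set.mem_Ioo] at hp hp'
      rw [← heq] at hp'
      refine hD (a := (p.1, p.2 - off (lv i))) ?_ ?_
      · simp only [rect, Set.mem_prod, Set.mem_Ioo]
        exact ⟨hp.1, by constructor <;> linarith [hp.2.1, hp.2.2]⟩
      · simp only [rect, Set.mem_prod, Set.mem_Ioo]
        exact ⟨hp'.1, by constructor <;> linarith [hp'.2.1, hp'.2.2]⟩
    · exact (main j i hgt).symm
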